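/- Let Q_n be the para-chain square cactus of order n: n squares (4-cycles) in a chain where consecutive squares share exactly one vertex, and the two shared vertices in each internal square are diametrically opposite. Then Mo(Q_{2k}) = 24k² and Mo(Q_{2k+1}) = 24k² + 24k for all k ≥ 1. -/

import Mathlib

open Finset

section MostarDefs

variable {V : Type*}

/-- Number of vertices of `G` strictly closer to `u` than to `v`. -/
noncomputable def closerCount (G : SimpleGraph V) (u v : V) : ℕ :=
  Nat.card {w : V // G.dist w u < G.dist w v}

/-- Contribution `|n_u - n_v|` of an edge, as a symmetric function on `Sym2 V`. -/
noncomputable def mostarTerm (G : SimpleGraph V) : Sym2 V → ℕ :=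
  Sym2.lift ⟨fun u v => ((closerCount G u v : ℤ) - closerCount G v u).natAbs,
    fun u v => by dsimp only; omega⟩

/-- The Mostar index of a finite graph. -/
noncomputable def mostar (G : SimpleGraph V) [Finite V] : ℕ :=
  letI := Fintype.ofFinite V
  letI := Classical.decEq V
  letI := Classical.decRel G.Adj
  ∑ e ∈ G.edgeFinset, mostarTerm G e

/-- Distance from a vertex `w` to an edge, as min over the endpoints. -/
noncomputable def vertexEdgeDist (G : SimpleGraph V) (w : V) : Sym2 V → ℕ :=
  Sym2.lift ⟨fun x y => min (G.dist x w) (G.dist y w), fun _ _ => min_comm _ _⟩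

/-- Number of edges of `G` strictly closer to `u` than to `v`. -/
noncomputable def edgeCloserCount (G : SimpleGraph V) (u v : V) : ℕ :=
  Nat.card {e : Sym2 V // e ∈ G.edgeSet ∧ vertexEdgeDist G u e < vertexEdgeDist G v e}

/-- Contribution `|m_u - m_v|` of an edge, as a symmetric function on `Sym2 V`. -/
noncomputable def emostarTerm (G : SimpleGraph V) : Sym2 V → ℕ :=
  Sym2.lift ⟨fun u v => ((edgeCloserCount G u v : ℤ) - edgeCloserCount G v u).natAbs,
    fun u v => by dsimp only; omega⟩

/-- The edge Mostar index of a finite graph. -/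
noncomputable def emostar (G : SimpleGraph V) [Finite V] : ℕ :=
  letI := Fintype.ofFinite V
  letI := Classical.decEq V
  letI := Classical.decRel G.Adj
  ∑ e ∈ G.edgeFinset, emostarTerm G e

end MostarDefs

/-- Global index of the `p`-th vertex of the `i`-th cycle in a chain of `n` cycles of
length `c`, where consecutive cycles share one vertex: position `0` of cycle `i` is the
entry cut vertex (identified with position `d` of cycle `i-1`). -/
def chainPos (c d i p : ℕ) : ℕ :=
  if p = 0 then (if i = 0 then 0 else (i - 1) * (c - 1) + d) else i * (c - 1) + p

/-- The chain cactus consisting of `n` cycles of length `c` in a chain, where consecutive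
cycles share exactly one vertex, and the two cut vertices of each internal cycle are at
positions `0` and `d` (hence at distance `min d (c - d)` in the cycle). -/
def cactusChain (n c d : ℕ) : SimpleGraph (Fin (n * (c - 1) + 1)) where
  Adj u v := u ≠ v ∧ ∃ i p q, i < n ∧ p < c ∧ q < c ∧
    ((p + 1) % c = q ∨ (q + 1) % c = p) ∧
    u.val = chainPos c d i p ∧ v.val = chainPos c d i q
  symm := ⟨by
    rintro u v ⟨hne, i, p, q, hi, hp, hq, hpq, hu, hv⟩
    exact ⟨hne.symm, i, q, p, hi, hq, hp, hpq.symm, hv, hu⟩⟩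
  loopless := ⟨fun u h => h.1 rfl⟩

namespace MoPara
open SimpleGraph

variable {n : ℕ}


def hh (x : ℕ) : ℕ :=
  if x = 0 then 0
  else if x % 3 = 1 then 2 * (x / 3) + 1
  else if x % 3 = 2 then 2 * (x / 3) + 2
  else 2 * (x / 3) - 1

lemma hh_cases (x : ℕ) :
    (x = 0 ∧ hh x = 0) ∨ (∃ i, x = 3 * i + 1 ∧ hh x = 2 * i + 1) ∨
    (∃ i, x = 3 * i + 2 ∧ hh x = 2 * i + 2) ∨ (∃ i, x = 3 * i + 3 ∧ hh x = 2 * i + 1) := by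
  unfold hh
  split_ifs with h1 h2 h3
  · exact Or.inl ⟨h1, rfl⟩
  · exact Or.inr (Or.inl ⟨x / 3, by omega, by omega⟩)
  · exact Or.inr (Or.inr (Or.inl ⟨x / 3, by omega, by omega⟩))
  · exact Or.inr (Or.inr (Or.inr ⟨x / 3 - 1, by omega, by omega⟩))

lemma hh_lo (i : ℕ) : hh (3 * i - 1) = 2 * i := by
  rcases hh_cases (3 * i - 1) with ⟨h1, h2⟩ | ⟨j, h1, h2⟩ | ⟨j, h1, h2⟩ | ⟨j, h1, h2⟩ <;> omega

lemma hh_s1 (i : ℕ) : hh (3 * i + 1) = 2 * i + 1 := by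
  rcases hh_cases (3 * i + 1) with ⟨h1, h2⟩ | ⟨j, h1, h2⟩ | ⟨j, h1, h2⟩ | ⟨j, h1, h2⟩ <;> omega

lemma hh_cut (i : ℕ) : hh (3 * i + 2) = 2 * i + 2 := by
  rcases hh_cases (3 * i + 2) with ⟨h1, h2⟩ | ⟨j, h1, h2⟩ | ⟨j, h1, h2⟩ | ⟨j, h1, h2⟩ <;> omega

lemma hh_s2 (i : ℕ) : hh (3 * i + 3) = 2 * i + 1 := by
  rcases hh_cases (3 * i + 3) with ⟨h1, h2⟩ | ⟨j, h1, h2⟩ | ⟨j, h1, h2⟩ | ⟨j, h1, h2⟩ <;> omega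

lemma hh_eq_zero {x : ℕ} (h : hh x = 0) : x = 0 := by
  rcases hh_cases x with ⟨h1, h2⟩ | ⟨j, h1, h2⟩ | ⟨j, h1, h2⟩ | ⟨j, h1, h2⟩ <;> omega

lemma cp0 (i : ℕ) : chainPos 4 2 i 0 = 3 * i - 1 := by simp [chainPos]; split_ifs <;> omega
lemma cp1 (i : ℕ) : chainPos 4 2 i 1 = 3 * i + 1 := by simp [chainPos]; omega
lemma cp2 (i : ℕ) : chainPos 4 2 i 2 = 3 * i + 2 := by simp [chainPos]; omega
lemma cp3 (i : ℕ) : chainPos 4 2 i 3 = 3 * i + 3 := by simp [chainPos]; omega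


/-- the graph, with the dimension expressed as `n*3+1` -/
abbrev GG (n : ℕ) : SimpleGraph (Fin (n * 3 + 1)) := cactusChain n 4 2

lemma adj_up (u v : Fin (n * 3 + 1)) (h : hh u.val + 1 = hh v.val) : (GG n).Adj u v := by
  rcases hh_cases v.val with ⟨h1, h2⟩ | ⟨b, h1, h2⟩ | ⟨b, h1, h2⟩ | ⟨b, h1, h2⟩
  · omega
  · -- v = 3b+1, u = 3b-1
    have hu : u.val = 3 * b - 1 := by
      rcases hh_cases u.val with ⟨g1, g2⟩ | ⟨a, g1, g2⟩ | ⟨a, g1, g2⟩ | ⟨a, g1, g2⟩ <;> omega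
    exact ⟨Fin.ne_of_val_ne (by omega), b, 0, 1, by have := v.isLt; omega, by omega, by omega,
      Or.inl (by norm_num), by rw [cp0]; omega, by rw [cp1]; omega⟩
  · -- v = 3b+2, u = 3b+1 or 3b+3
    have hu : u.val = 3 * b + 1 ∨ u.val = 3 * b + 3 := by
      rcases hh_cases u.val with ⟨g1, g2⟩ | ⟨a, g1, g2⟩ | ⟨a, g1, g2⟩ | ⟨a, g1, g2⟩ <;> omega
    rcases hu with hu | hu
    · exact ⟨Fin.ne_of_val_ne (by omega), b, 1, 2, by have := v.isLt; omega, by omega, by omega,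
        Or.inl (by norm_num), by rw [cp1]; omega, by rw [cp2]; omega⟩
    · exact ⟨Fin.ne_of_val_ne (by omega), b, 3, 2, by have := v.isLt; omega, by omega, by omega,
        Or.inr (by norm_num), by rw [cp3]; omega, by rw [cp2]; omega⟩
  · -- v = 3b+3, u = 3b-1
    have hu : u.val = 3 * b - 1 := by
      rcases hh_cases u.val with ⟨g1, g2⟩ | ⟨a, g1, g2⟩ | ⟨a, g1, g2⟩ | ⟨a, g1, g2⟩ <;> omega
    exact ⟨Fin.ne_of_val_ne (by omega), b, 0, 3, by have := v.isLt; omega, by omega, by omega,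
      Or.inr (by norm_num), by rw [cp0]; omega, by rw [cp3]; omega⟩

lemma adj_iff {u v : Fin (n * 3 + 1)} :
    (GG n).Adj u v ↔ (hh u.val + 1 = hh v.val ∨ hh v.val + 1 = hh u.val) := by
  constructor
  · rintro ⟨hne, i, p, q, hi, hp, hq, hpq, hu, hv⟩
    interval_cases p <;> interval_cases q <;> rcases hpq with hpq | hpq <;>
      first
      | omega
      | (simp only [cp0, cp1, cp2, cp3] at hu hv;
         simp only [hu, hv, hh_lo, hh_s1, hh_cut, hh_s2]; first | omega | tauto)
  · rintro (h | h)
    · exact adj_up u v h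
    · exact (adj_up v u h).symm




lemma hh_le (u : Fin (n * 3 + 1)) : hh u.val ≤ 2 * n := by
  have := u.isLt
  rcases hh_cases u.val with ⟨h1, h2⟩ | ⟨j, h1, h2⟩ | ⟨j, h1, h2⟩ | ⟨j, h1, h2⟩ <;> omega

lemma exists_pred (v : Fin (n * 3 + 1)) (h : 1 ≤ hh v.val) :
    ∃ w : Fin (n * 3 + 1), hh w.val + 1 = hh v.val := by
  have hlt := v.isLt
  rcases hh_cases v.val with ⟨h1, h2⟩ | ⟨b, h1, h2⟩ | ⟨b, h1, h2⟩ | ⟨b, h1, h2⟩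
  · omega
  · exact ⟨⟨3 * b - 1, by omega⟩, by simpa [hh_lo] using by omega⟩
  · exact ⟨⟨3 * b + 1, by omega⟩, by simpa [hh_s1] using by omega⟩
  · exact ⟨⟨3 * b - 1, by omega⟩, by simpa [hh_lo] using by omega⟩

lemma exists_walk_up : ∀ (d : ℕ) (u v : Fin (n * 3 + 1)),
    hh u.val + (d + 1) = hh v.val → ∃ p : (GG n).Walk u v, p.length = d + 1 := by
  intro d
  induction d with
  | zero =>
    intro u v h
    exact ⟨Walk.cons (adj_up u v (by omega)) Walk.nil, by simp⟩
  | succ d ih =>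
    intro u v h
    obtain ⟨w, hw⟩ := exists_pred v (by omega)
    obtain ⟨p, hp⟩ := ih u w (by omega)
    exact ⟨p.concat (adj_up w v hw), by simp [Walk.length_concat, hp]⟩

lemma walk_bound {u v : Fin (n * 3 + 1)} (p : (GG n).Walk u v) :
    hh v.val ≤ hh u.val + p.length ∧ hh u.val ≤ hh v.val + p.length := by
  induction p with
  | nil => simp
  | @cons a b c h p ih =>
    have hab := adj_iff.mp h
    simp only [Walk.length_cons]
    omega

lemma reachable (u v : Fin (n * 3 + 1)) : (GG n).Reachable u v := by
  -- via walks to/from the top? simpler: compare levels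
  rcases Nat.lt_trichotomy (hh u.val) (hh v.val) with h | h | h
  · obtain ⟨p, _⟩ := exists_walk_up (hh v.val - hh u.val - 1) u v (by omega)
    exact ⟨p⟩
  · by_cases huv : u = v
    · exact huv ▸ Reachable.refl u
    · by_cases h0 : hh u.val = 0
      · have hv0 : hh v.val = 0 := by omega
        exact absurd (Fin.ext (by rw [hh_eq_zero h0, hh_eq_zero hv0])) huv
      · obtain ⟨w, hw⟩ := exists_pred u (by omega)
        exact ⟨Walk.cons ((adj_up w u hw).symm) (Walk.cons (adj_up w v (by omega)) Walk.nil)⟩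
  · obtain ⟨p, _⟩ := exists_walk_up (hh u.val - hh v.val - 1) v u (by omega)
    exact ⟨p.reverse⟩

lemma dist_up (u v : Fin (n * 3 + 1)) (h : hh u.val < hh v.val) :
    (GG n).dist u v = hh v.val - hh u.val := by
  obtain ⟨p, hp⟩ := exists_walk_up (hh v.val - hh u.val - 1) u v (by omega)
  have h1 : (GG n).dist u v ≤ hh v.val - hh u.val := by
    have := SimpleGraph.dist_le p; omega
  obtain ⟨q, hq⟩ := (reachable u v).exists_walk_length_eq_dist
  have := walk_bound q
  omega

lemma dist_same (u v : Fin (n * 3 + 1)) (hne : u ≠ v) (h : hh u.val = hh v.val) :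
    (GG n).dist u v = 2 := by
  have h0 : 1 ≤ hh u.val := by
    rcases Nat.eq_zero_or_pos (hh u.val) with h0 | h0
    · have hv0 : hh v.val = 0 := by omega
      exact absurd (Fin.ext (by rw [hh_eq_zero h0, hh_eq_zero hv0])) hne
    · exact h0
  obtain ⟨w, hw⟩ := exists_pred u h0
  have a1 : (GG n).Adj u w := (adj_up w u hw).symm
  have a2 : (GG n).Adj w v := adj_up w v (by omega)
  have hle : (GG n).dist u v ≤ 2 := by
    have := SimpleGraph.dist_le (Walk.cons a1 (Walk.cons a2 Walk.nil))
    simpa using this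
  have hne1 : (GG n).dist u v ≠ 1 := by
    intro hd
    have := adj_iff.mp (SimpleGraph.dist_eq_one_iff_adj.mp hd)
    omega
  have hne0 : (GG n).dist u v ≠ 0 := by
    intro hd
    rcases SimpleGraph.dist_eq_zero_iff_eq_or_not_reachable.mp hd with h' | h'
    · exact hne h'
    · exact h' (reachable u v)
  omega



lemma dist_down (u v : Fin (n * 3 + 1)) (h : hh v.val < hh u.val) :
    (GG n).dist u v = hh u.val - hh v.val := by
  rw [SimpleGraph.dist_comm]; exact dist_up v u h

lemma closer_iff (u v w : Fin (n * 3 + 1)) (huv : hh u.val + 1 = hh v.val) :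
    ((GG n).dist w u < (GG n).dist w v) ↔
      (hh w.val < hh u.val ∨ w = u ∨ (hh w.val = hh v.val ∧ w ≠ v)) := by
  have hune : u ≠ v := fun e => by rw [e] at huv; omega
  by_cases hwu : w = u
  · subst hwu
    rw [SimpleGraph.dist_self, dist_up w v (by omega)]
    exact iff_of_true (by omega) (Or.inr (Or.inl rfl))
  · by_cases hwv : w = v
    · subst hwv
      rw [SimpleGraph.dist_self, dist_down w u (by omega)]
      exact iff_of_false (by omega) (by rintro (h | h | ⟨h1, h2⟩) <;> simp_all <;> omega)
    · rcases Nat.lt_trichotomy (hh w.val) (hh u.val) with hc | hc | hc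
      · rw [dist_up w u hc, dist_up w v (by omega)]
        exact iff_of_true (by omega) (Or.inl hc)
      · rw [dist_same w u hwu hc, dist_up w v (by omega)]
        exact iff_of_false (by omega)
          (by rintro (h | h | ⟨h1, h2⟩) <;> first | omega | exact hwu h)
      · rcases Nat.lt_trichotomy (hh w.val) (hh v.val) with hd | hd | hd
        · omega
        · rw [dist_same w v hwv hd, dist_down w u (by omega)]
          exact iff_of_true (by omega) (Or.inr (Or.inr ⟨hd, hwv⟩))
        · rw [dist_down w u (by omega), dist_down w v (by omega)]
          exact iff_of_false (by omega)
            (by rintro (h | h | ⟨h1, h2⟩) <;> first | omega | exact hwu h)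

lemma closer_iff' (u v w : Fin (n * 3 + 1)) (huv : hh u.val + 1 = hh v.val) :
    ((GG n).dist w v < (GG n).dist w u) ↔
      (hh v.val < hh w.val ∨ w = v ∨ (hh w.val = hh u.val ∧ w ≠ u)) := by
  have hune : u ≠ v := fun e => by rw [e] at huv; omega
  by_cases hwv : w = v
  · subst hwv
    rw [SimpleGraph.dist_self, dist_down w u (by omega)]
    exact iff_of_true (by omega) (Or.inr (Or.inl rfl))
  · by_cases hwu : w = u
    · subst hwu
      rw [SimpleGraph.dist_self, dist_up w v (by omega)]
      exact iff_of_false (by omega) (by rintro (h | h | ⟨h1, h2⟩) <;> simp_all <;> omega)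
    · rcases Nat.lt_trichotomy (hh w.val) (hh v.val) with hc | hc | hc
      · rcases Nat.lt_trichotomy (hh w.val) (hh u.val) with hd | hd | hd
        · rw [dist_up w u hd, dist_up w v (by omega)]
          exact iff_of_false (by omega)
            (by rintro (h | h | ⟨h1, h2⟩) <;> first | omega | exact hwv h)
        · rw [dist_same w u hwu hd, dist_up w v (by omega)]
          exact iff_of_true (by omega) (Or.inr (Or.inr ⟨hd, hwu⟩))
        · omega
      · rw [dist_same w v hwv hc, dist_down w u (by omega)]
        exact iff_of_false (by omega)
          (by rintro (h | h | ⟨h1, h2⟩) <;> first | omega | exact hwv h)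
      · rw [dist_down w u (by omega), dist_down w v (by omega)]
        exact iff_of_true (by omega) (Or.inl hc)

lemma closerCount_up (u v : Fin (n * 3 + 1)) (huv : hh u.val + 1 = hh v.val) :
    closerCount (GG n) u v =
      (univ.filter fun w : Fin (n * 3 + 1) => hh w.val < hh u.val).card +
      (univ.filter fun w : Fin (n * 3 + 1) => hh w.val = hh v.val).card := by
  rw [closerCount, Nat.card_eq_fintype_card, Fintype.card_subtype]
  have hset : (univ.filter fun w : Fin (n * 3 + 1) => (GG n).dist w u < (GG n).dist w v)
      = insert u (univ.filter fun w : Fin (n * 3 + 1) => hh w.val < hh u.val)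
        ∪ (univ.filter fun w : Fin (n * 3 + 1) => hh w.val = hh v.val).erase v := by
    ext w
    simp only [mem_filter, mem_univ, true_and, mem_union, mem_insert, mem_erase]
    rw [closer_iff u v w huv]
    tauto
  rw [hset, card_union_of_disjoint, card_insert_of_notMem, card_erase_of_mem]
  · have hv : v ∈ (univ.filter fun w : Fin (n * 3 + 1) => hh w.val = hh v.val) := by simp
    have := Finset.card_pos.mpr ⟨v, hv⟩
    omega
  · simp
  · simp
  · rw [Finset.disjoint_left]
    intro w hw1 hw2
    simp only [mem_insert, mem_filter, mem_univ, true_and, mem_erase] at hw1 hw2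
    rcases hw1 with h | h
    · subst h; omega
    · omega

lemma closerCount_down (u v : Fin (n * 3 + 1)) (huv : hh u.val + 1 = hh v.val) :
    closerCount (GG n) v u =
      (univ.filter fun w : Fin (n * 3 + 1) => hh v.val < hh w.val).card +
      (univ.filter fun w : Fin (n * 3 + 1) => hh w.val = hh u.val).card := by
  rw [closerCount, Nat.card_eq_fintype_card, Fintype.card_subtype]
  have hset : (univ.filter fun w : Fin (n * 3 + 1) => (GG n).dist w v < (GG n).dist w u)
      = insert v (univ.filter fun w : Fin (n * 3 + 1) => hh v.val < hh w.val)
        ∪ (univ.filter fun w : Fin (n * 3 + 1) => hh w.val = hh u.val).erase u := by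
    ext w
    simp only [mem_filter, mem_univ, true_and, mem_union, mem_insert, mem_erase]
    rw [closer_iff' u v w huv]
    tauto
  rw [hset, card_union_of_disjoint, card_insert_of_notMem, card_erase_of_mem]
  · have hu : u ∈ (univ.filter fun w : Fin (n * 3 + 1) => hh w.val = hh u.val) := by simp
    have := Finset.card_pos.mpr ⟨u, hu⟩
    omega
  · simp
  · simp
  · rw [Finset.disjoint_left]
    intro w hw1 hw2
    simp only [mem_insert, mem_filter, mem_univ, true_and, mem_erase] at hw1 hw2
    rcases hw1 with h | h
    · subst h; omega
    · omega



lemma Ccard_odd (ℓ i : ℕ) (hi : i < n) (hl : ℓ = 2 * i + 1) :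
    (univ.filter fun w : Fin (n * 3 + 1) => hh w.val = ℓ).card = 2 := by
  have hset : (univ.filter fun w : Fin (n * 3 + 1) => hh w.val = ℓ)
      = {(⟨3 * i + 1, by omega⟩ : Fin (n * 3 + 1)), ⟨3 * i + 3, by omega⟩} := by
    ext w
    simp only [mem_filter, mem_univ, true_and, mem_insert, mem_singleton, Fin.ext_iff]
    constructor
    · intro h
      rcases hh_cases w.val with ⟨h1, h2⟩ | ⟨j, h1, h2⟩ | ⟨j, h1, h2⟩ | ⟨j, h1, h2⟩ <;> omega
    · rintro (h | h) <;> simp only [h, hh_s1, hh_s2] <;> omega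
  rw [hset]
  rw [card_insert_of_notMem (by simp [Fin.ext_iff]), card_singleton]

lemma Ccard_even (ℓ i : ℕ) (hi : i ≤ n) (hl : ℓ = 2 * i) :
    (univ.filter fun w : Fin (n * 3 + 1) => hh w.val = ℓ).card = 1 := by
  have hset : (univ.filter fun w : Fin (n * 3 + 1) => hh w.val = ℓ)
      = {(⟨3 * i - 1, by omega⟩ : Fin (n * 3 + 1))} := by
    ext w
    simp only [mem_filter, mem_univ, true_and, mem_singleton, Fin.ext_iff]
    constructor
    · intro h
      rcases hh_cases w.val with ⟨h1, h2⟩ | ⟨j, h1, h2⟩ | ⟨j, h1, h2⟩ | ⟨j, h1, h2⟩ <;> omega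
    · intro h
      simp only [h]
      rw [hh_lo]; omega
  rw [hset, card_singleton]

lemma Bcard (ℓ : ℕ) (hl : ℓ ≤ 2 * n + 1) :
    (univ.filter fun w : Fin (n * 3 + 1) => hh w.val < ℓ).card = ℓ + ℓ / 2 := by
  induction ℓ with
  | zero => simp
  | succ ℓ ih =>
    have hstep : (univ.filter fun w : Fin (n * 3 + 1) => hh w.val < ℓ + 1)
        = (univ.filter fun w : Fin (n * 3 + 1) => hh w.val < ℓ)
          ∪ (univ.filter fun w : Fin (n * 3 + 1) => hh w.val = ℓ) := by
      ext w; simp only [mem_filter, mem_univ, true_and, mem_union]; omega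
    have hdisj : Disjoint (univ.filter fun w : Fin (n * 3 + 1) => hh w.val < ℓ)
        (univ.filter fun w : Fin (n * 3 + 1) => hh w.val = ℓ) := by
      rw [Finset.disjoint_left]
      intro w h1 h2
      simp only [mem_filter, mem_univ, true_and] at h1 h2
      omega
    rw [hstep, card_union_of_disjoint hdisj]
    rw [ih (by omega)]
    rcases Nat.even_or_odd ℓ with ⟨i, hi⟩ | ⟨i, hi⟩
    · rw [Ccard_even ℓ i (by omega) (by omega)]; omega
    · rw [Ccard_odd ℓ i (by omega) (by omega)]; omega

lemma Tcard (ℓ : ℕ) (hl : ℓ ≤ 2 * n) :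
    (univ.filter fun w : Fin (n * 3 + 1) => ℓ < hh w.val).card
      = (n * 3 + 1) - ((ℓ + 1) + (ℓ + 1) / 2) := by
  have hset : (univ.filter fun w : Fin (n * 3 + 1) => ℓ < hh w.val)
      = univ \ (univ.filter fun w : Fin (n * 3 + 1) => hh w.val < ℓ + 1) := by
    ext w; simp only [mem_filter, mem_univ, true_and, mem_sdiff]; omega
  rw [hset, card_sdiff_of_subset (filter_subset _ _), Bcard (ℓ + 1) (by omega)]
  simp

lemma term_eq (i : ℕ) (hi : i < n) (u v : Fin (n * 3 + 1))
    (huv : hh u.val + 1 = hh v.val) (hlow : hh u.val = 2 * i ∨ hh u.val = 2 * i + 1) :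
    mostarTerm (GG n) s(u, v) = ((6 * i + 3 : ℤ) - 3 * n).natAbs := by
  have h1 := closerCount_up u v huv
  have h2 := closerCount_down u v huv
  show ((closerCount (GG n) u v : ℤ) - closerCount (GG n) v u).natAbs = _
  rcases hlow with hl | hl
  · rw [Bcard (hh u.val) (by omega), Ccard_odd (hh v.val) i hi (by omega)] at h1
    rw [Tcard (hh v.val) (by omega), Ccard_even (hh u.val) i (by omega) (by omega)] at h2
    omega
  · rw [Bcard (hh u.val) (by omega), Ccard_even (hh v.val) (i+1) (by omega) (by omega)] at h1
    rw [Tcard (hh v.val) (by omega), Ccard_odd (hh u.val) i hi (by omega)] at h2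
    omega



def vx (n x : ℕ) : Fin (n * 3 + 1) := ⟨x % (n * 3 + 1), Nat.mod_lt _ (by omega)⟩

lemma vx_val (x : ℕ) (h : x < n * 3 + 1) : (vx n x).val = x := Nat.mod_eq_of_lt h

def EE (n i : ℕ) : Finset (Sym2 (Fin (n * 3 + 1))) :=
  {s(vx n (3 * i - 1), vx n (3 * i + 1)), s(vx n (3 * i - 1), vx n (3 * i + 3)),
   s(vx n (3 * i + 1), vx n (3 * i + 2)), s(vx n (3 * i + 3), vx n (3 * i + 2))}

set_option maxHeartbeats 2000000 in
lemma mem_EE (i : ℕ) (hi : i < n) (u v : Fin (n * 3 + 1)) :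
    s(u, v) ∈ EE n i ↔
      ((u.val = 3 * i - 1 ∧ v.val = 3 * i + 1) ∨ (v.val = 3 * i - 1 ∧ u.val = 3 * i + 1) ∨
       (u.val = 3 * i - 1 ∧ v.val = 3 * i + 3) ∨ (v.val = 3 * i - 1 ∧ u.val = 3 * i + 3) ∨
       (u.val = 3 * i + 1 ∧ v.val = 3 * i + 2) ∨ (v.val = 3 * i + 1 ∧ u.val = 3 * i + 2) ∨
       (u.val = 3 * i + 3 ∧ v.val = 3 * i + 2) ∨ (v.val = 3 * i + 3 ∧ u.val = 3 * i + 2)) := by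
  have ha : (vx n (3 * i - 1)).val = 3 * i - 1 := vx_val _ (by omega)
  have hb : (vx n (3 * i + 1)).val = 3 * i + 1 := vx_val _ (by omega)
  have hc : (vx n (3 * i + 2)).val = 3 * i + 2 := vx_val _ (by omega)
  have hd : (vx n (3 * i + 3)).val = 3 * i + 3 := vx_val _ (by omega)
  unfold EE
  simp only [mem_insert, mem_singleton, Sym2.eq_iff, Fin.ext_iff, ha, hb, hc, hd]
  tauto

set_option maxHeartbeats 2000000 in
lemma edgeFinset_eq [Fintype (GG n).edgeSet] :
    (GG n).edgeFinset = (range n).biUnion (EE n) := by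
  ext e
  induction e with
  | _ u v =>
    simp only [SimpleGraph.mem_edgeFinset, SimpleGraph.mem_edgeSet, mem_biUnion, mem_range]
    constructor
    · rintro ⟨hne, i, p, q, hi, hp, hq, hpq, hu, hv⟩
      refine ⟨i, hi, (mem_EE i hi u v).mpr ?_⟩
      interval_cases p <;> interval_cases q <;> rcases hpq with h | h <;>
        simp only [cp0, cp1, cp2, cp3] at hu hv <;> first | omega | tauto
    · rintro ⟨i, hi, he⟩
      rw [mem_EE i hi] at he
      rcases he with ⟨h1, h2⟩ | ⟨h1, h2⟩ | ⟨h1, h2⟩ | ⟨h1, h2⟩ |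
        ⟨h1, h2⟩ | ⟨h1, h2⟩ | ⟨h1, h2⟩ | ⟨h1, h2⟩
      · exact ⟨Fin.ne_of_val_ne (by omega), i, 0, 1, hi, by omega, by omega,
          Or.inl (by norm_num), by rw [cp0]; omega, by rw [cp1]; omega⟩
      · exact ⟨Fin.ne_of_val_ne (by omega), i, 1, 0, hi, by omega, by omega,
          Or.inr (by norm_num), by rw [cp1]; omega, by rw [cp0]; omega⟩
      · exact ⟨Fin.ne_of_val_ne (by omega), i, 0, 3, hi, by omega, by omega,
          Or.inr (by norm_num), by rw [cp0]; omega, by rw [cp3]; omega⟩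
      · exact ⟨Fin.ne_of_val_ne (by omega), i, 3, 0, hi, by omega, by omega,
          Or.inl (by norm_num), by rw [cp3]; omega, by rw [cp0]; omega⟩
      · exact ⟨Fin.ne_of_val_ne (by omega), i, 1, 2, hi, by omega, by omega,
          Or.inl (by norm_num), by rw [cp1]; omega, by rw [cp2]; omega⟩
      · exact ⟨Fin.ne_of_val_ne (by omega), i, 2, 1, hi, by omega, by omega,
          Or.inr (by norm_num), by rw [cp2]; omega, by rw [cp1]; omega⟩
      · exact ⟨Fin.ne_of_val_ne (by omega), i, 3, 2, hi, by omega, by omega,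
          Or.inr (by norm_num), by rw [cp3]; omega, by rw [cp2]; omega⟩
      · exact ⟨Fin.ne_of_val_ne (by omega), i, 2, 3, hi, by omega, by omega,
          Or.inl (by norm_num), by rw [cp2]; omega, by rw [cp3]; omega⟩

set_option maxHeartbeats 2000000 in
lemma EE_disjoint : (↑(range n) : Set ℕ).PairwiseDisjoint (EE n) := by
  intro i hi j hj hij
  simp only [coe_range, Set.mem_Iio] at hi hj
  simp only [Function.onFun]
  rw [Finset.disjoint_left]
  intro e he1 he2
  induction e with
  | _ u v =>
    rw [mem_EE i hi u v] at he1
    rw [mem_EE j hj u v] at he2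
    rcases he1 with ⟨h1, h2⟩ | ⟨h1, h2⟩ | ⟨h1, h2⟩ | ⟨h1, h2⟩ |
        ⟨h1, h2⟩ | ⟨h1, h2⟩ | ⟨h1, h2⟩ | ⟨h1, h2⟩ <;>
      rcases he2 with ⟨g1, g2⟩ | ⟨g1, g2⟩ | ⟨g1, g2⟩ | ⟨g1, g2⟩ |
        ⟨g1, g2⟩ | ⟨g1, g2⟩ | ⟨g1, g2⟩ | ⟨g1, g2⟩ <;> omega

set_option maxHeartbeats 2000000 in
lemma sum_EE (f : Sym2 (Fin (n * 3 + 1)) → ℕ) (i : ℕ) (hi : i < n) :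
    ∑ e ∈ EE n i, f e =
      f s(vx n (3 * i - 1), vx n (3 * i + 1)) + f s(vx n (3 * i - 1), vx n (3 * i + 3)) +
      f s(vx n (3 * i + 1), vx n (3 * i + 2)) + f s(vx n (3 * i + 3), vx n (3 * i + 2)) := by
  have ha : (vx n (3 * i - 1)).val = 3 * i - 1 := vx_val _ (by omega)
  have hb : (vx n (3 * i + 1)).val = 3 * i + 1 := vx_val _ (by omega)
  have hc : (vx n (3 * i + 2)).val = 3 * i + 2 := vx_val _ (by omega)
  have hd : (vx n (3 * i + 3)).val = 3 * i + 3 := vx_val _ (by omega)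
  unfold EE
  rw [Finset.sum_insert (by
        simp only [mem_insert, mem_singleton, Sym2.eq_iff, Fin.ext_iff, ha, hb, hc, hd]; omega),
      Finset.sum_insert (by
        simp only [mem_insert, mem_singleton, Sym2.eq_iff, Fin.ext_iff, ha, hb, hc, hd]; omega),
      Finset.sum_insert (by
        simp only [mem_singleton, Sym2.eq_iff, Fin.ext_iff, ha, hb, hc, hd]; omega),
      Finset.sum_singleton]
  omega


lemma mostar_eq (n : ℕ) :
    mostar (GG n) = ∑ i ∈ range n, 4 * ((6 * i + 3 : ℤ) - 3 * n).natAbs := by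
  have key : ∀ (inst : Fintype (GG n).edgeSet),
      ∑ e ∈ @SimpleGraph.edgeFinset _ (GG n) inst, mostarTerm (GG n) e
        = ∑ i ∈ range n, 4 * ((6 * i + 3 : ℤ) - 3 * n).natAbs := by
    intro inst
    rw [show @SimpleGraph.edgeFinset _ (GG n) inst = (range n).biUnion (EE n) from
      edgeFinset_eq, Finset.sum_biUnion EE_disjoint]
    refine Finset.sum_congr rfl fun i hi => ?_
    rw [mem_range] at hi
    rw [sum_EE _ i hi]
    rw [term_eq i hi _ _ (by rw [vx_val _ (by omega), vx_val _ (by omega), hh_lo, hh_s1])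
      (Or.inl (by rw [vx_val _ (by omega), hh_lo])),
      term_eq i hi _ _ (by rw [vx_val _ (by omega), vx_val _ (by omega), hh_lo, hh_s2])
        (Or.inl (by rw [vx_val _ (by omega), hh_lo])),
      term_eq i hi _ _ (by rw [vx_val _ (by omega), vx_val _ (by omega), hh_s1, hh_cut])
        (Or.inr (by rw [vx_val _ (by omega), hh_s1])),
      term_eq i hi _ _ (by rw [vx_val _ (by omega), vx_val _ (by omega), hh_s2, hh_cut])
        (Or.inr (by rw [vx_val _ (by omega), hh_s2]))]
    omega
  unfold mostar
  exact key _

lemma sum_range_add' (f : ℕ → ℕ) (a b : ℕ) :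
    ∑ i ∈ range (a + b), f i = ∑ i ∈ range a, f i + ∑ i ∈ range b, f (a + i) := by
  induction b with
  | zero => simp
  | succ b ih =>
    rw [show a + (b + 1) = (a + b) + 1 from rfl, sum_range_succ, sum_range_succ, ih]
    omega

lemma base1 (m : ℕ) : ∑ i ∈ range m, 4 * (6 * i + 3) = 12 * m * m := by
  induction m with
  | zero => simp
  | succ m ih => rw [sum_range_succ, ih]; ring

lemma base3 (m : ℕ) : ∑ i ∈ range (m + 1), 24 * i = 12 * m * (m + 1) := by
  induction m with
  | zero => simp
  | succ m ih => rw [sum_range_succ, ih]; ring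

lemma even_sum (k : ℕ) :
    ∑ i ∈ range (2 * k), 4 * ((6 * i + 3 : ℤ) - 3 * (2 * k : ℕ)).natAbs = 24 * k ^ 2 := by
  have h2k : 2 * k = k + k := by omega
  rw [h2k, sum_range_add']
  have e1 : ∑ i ∈ range k, 4 * ((6 * i + 3 : ℤ) - 3 * (k + k : ℕ)).natAbs
      = ∑ i ∈ range k, 4 * (6 * (k - 1 - i) + 3) := by
    refine Finset.sum_congr rfl fun i hi => ?_
    rw [mem_range] at hi
    omega
  have e2 : ∑ i ∈ range k, 4 * (6 * ((k + i : ℕ) : ℤ) + 3 - 3 * ((k + k : ℕ) : ℤ)).natAbs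
      = ∑ i ∈ range k, 4 * (6 * i + 3) := by
    refine Finset.sum_congr rfl fun i hi => ?_
    rw [mem_range] at hi
    omega
  rw [e1, e2, Finset.sum_range_reflect (fun i => 4 * (6 * i + 3)) k, base1]
  ring

lemma odd_sum (k : ℕ) :
    ∑ i ∈ range (2 * k + 1), 4 * ((6 * i + 3 : ℤ) - 3 * (2 * k + 1 : ℕ)).natAbs
      = 24 * k ^ 2 + 24 * k := by
  have h2k : 2 * k + 1 = (k + 1) + k := by omega
  rw [h2k, sum_range_add']
  have e1 : ∑ i ∈ range (k + 1), 4 * ((6 * i + 3 : ℤ) - 3 * ((k + 1) + k : ℕ)).natAbs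
      = ∑ i ∈ range (k + 1), 24 * (k + 1 - 1 - i) := by
    refine Finset.sum_congr rfl fun i hi => ?_
    rw [mem_range] at hi
    omega
  have e2 : ∑ i ∈ range k, 4 * (6 * ((k + 1 + i : ℕ) : ℤ) + 3 - 3 * ((k + 1 + k : ℕ) : ℤ)).natAbs
      = ∑ i ∈ range k, 24 * (i + 1) := by
    refine Finset.sum_congr rfl fun i hi => ?_
    rw [mem_range] at hi
    omega
  have e4 : (∑ i ∈ range k, 24 * (i + 1)) = 12 * k * (k + 1) := by
    have e3 := Finset.sum_range_succ' (fun i => 24 * i) k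
    have b1 := base3 k
    omega
  rw [e1, e2, Finset.sum_range_reflect (fun i => 24 * i) (k + 1), base3 k, e4]
  ring



end MoPara


theorem mostar_paraSquare (k : ℕ) (hk : 1 ≤ k) :
    mostar (cactusChain (2 * k) 4 2) = 24 * k ^ 2 ∧
    mostar (cactusChain (2 * k + 1) 4 2) = 24 * k ^ 2 + 24 * k := by
  constructor
  · exact (MoPara.mostar_eq (2 * k)).trans (MoPara.even_sum k)
  · exact (MoPara.mostar_eq (2 * k + 1)).trans (MoPara.odd_sum k)
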